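/- No unitarily invariant distance on quantum states can be super-additive with strict improvement under local change while the states remain orthogonal: concretely, for the 3-qubit states ρ₀ = |000⟩⟨000|, ρ₁ = |GHZ₂⟩⟨GHZ₂| ⊗ |0⟩⟨0|, and target τ = |GHZ₂⟩⟨GHZ₂| ⊗ |1⟩⟨1|, any distance D that is invariant under joint unitary conjugation and depends only on the pair of states satisfies D(ρ₀, τ) = D(ρ₁, τ), whereas D_{EM}(ρ₁, τ) = 1 < D_{EM}(ρ₀, τ). -/

import Mathlib

open scoped BigOperators ComplexOrder

/-- Matrices acting on `n` qubits. -/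
abbrev QMat (n : ℕ) := Matrix (Fin n → Fin 2) (Fin n → Fin 2) ℂ

/-- The trace norm (sum of the absolute values of the eigenvalues) of a Hermitian matrix. -/
noncomputable def traceNorm {n : ℕ} (X : QMat n) : ℝ :=
  if h : X.IsHermitian then ∑ i, |h.eigenvalues i| else 0

/-- The partial trace of `X` over qubit `i` vanishes. -/
def ptraceZero {n : ℕ} (i : Fin n) (X : QMat n) : Prop :=
  ∀ a b : Fin n → Fin 2,
    ∑ v : Fin 2, X (Function.update a i v) (Function.update b i v) = 0

/-- The quantum Wasserstein-1 (earth mover's) norm, primal formulation: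
`‖X‖_EM = (1/2) min { Σᵢ ‖Xᵢ‖₁ : Xᵢ Hermitian, Trᵢ Xᵢ = 0, Σᵢ Xᵢ = X }`. -/
noncomputable def emNorm {n : ℕ} (X : QMat n) : ℝ :=
  (1 / 2) * sInf { r | ∃ Xs : Fin n → QMat n,
    (∀ i, (Xs i).IsHermitian) ∧ (∀ i, ptraceZero i (Xs i)) ∧
    (∑ i, Xs i) = X ∧ r = ∑ i, traceNorm (Xs i) }

/-- The quantum Wasserstein-1 (earth mover's) distance. -/
noncomputable def emDist {n : ℕ} (ρ σ : QMat n) : ℝ := emNorm (ρ - σ)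

/-- A density matrix: positive semidefinite with unit trace. -/
def IsState {n : ℕ} (ρ : QMat n) : Prop := ρ.PosSemidef ∧ ρ.trace = 1

/-- The density matrix `|v⟩⟨v|` of a pure state with amplitudes `v`. -/
noncomputable def outer {n : ℕ} (v : (Fin n → Fin 2) → ℂ) : QMat n :=
  Matrix.vecMulVec v (star v)

/-- Amplitudes of `|000⟩`. -/
noncomputable def v000 : (Fin 3 → Fin 2) → ℂ := fun u =>
  if u = ![0, 0, 0] then 1 else 0

/-- Amplitudes of `|GHZ₂⟩ ⊗ |0⟩ = (|000⟩ + |110⟩)/√2`. -/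
noncomputable def vGHZ0 : (Fin 3 → Fin 2) → ℂ := fun u =>
  if u = ![0, 0, 0] ∨ u = ![1, 1, 0] then ((Real.sqrt 2)⁻¹ : ℂ) else 0

/-- Amplitudes of the target `|GHZ₂⟩ ⊗ |1⟩ = (|001⟩ + |111⟩)/√2`. -/
noncomputable def vTar : (Fin 3 → Fin 2) → ℂ := fun u =>
  if u = ![0, 0, 1] ∨ u = ![1, 1, 1] then ((Real.sqrt 2)⁻¹ : ℂ) else 0

/-! ### Auxiliary material -/

open Matrix

abbrev B3 := Fin 3 → Fin 2

section Basic

lemma sum_pi3 {M : Type*} [AddCommMonoid M] (f : B3 → M) :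
    ∑ u, f u = ∑ a : Fin 2, ∑ b : Fin 2, ∑ c : Fin 2, f ![a,b,c] := by
  rw [← (Fintype.sum_bijective (fun p : Fin 2 × Fin 2 × Fin 2 => (![p.1, p.2.1, p.2.2] : B3))
    (by decide) _ f (fun p => rfl))]
  simp [Fintype.sum_prod_type]

lemma csq : ((Real.sqrt 2)⁻¹ : ℂ) * ((Real.sqrt 2)⁻¹ : ℂ) = 1/2 := by
  have h2 : Real.sqrt 2 * Real.sqrt 2 = 2 := Real.mul_self_sqrt (by norm_num)
  rw [← mul_inv]
  norm_cast
  rw [h2]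
  norm_num

lemma vec3_expand (a : Fin 3 → Fin 2) : a = ![a 0, a 1, a 2] := by
  funext i; fin_cases i <;> rfl

lemma update_vec3_0 (x y z v : Fin 2) :
    Function.update (![x,y,z] : Fin 3 → Fin 2) 0 v = ![v,y,z] := by
  funext i; fin_cases i <;> simp [Function.update]

lemma update_vec3_1 (x y z v : Fin 2) :
    Function.update (![x,y,z] : Fin 3 → Fin 2) 1 v = ![x,v,z] := by
  funext i; fin_cases i <;> simp [Function.update, Fin.ext_iff]

lemma update_vec3_2 (x y z v : Fin 2) :
    Function.update (![x,y,z] : Fin 3 → Fin 2) 2 v = ![x,y,v] := by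
  funext i; fin_cases i <;> simp [Function.update, Fin.ext_iff]

end Basic

section OuterAlgebra

lemma outer_apply {n : ℕ} (v : (Fin n → Fin 2) → ℂ) (a b) :
    outer v a b = v a * star (v b) := rfl

lemma outer_isHermitian {n : ℕ} (v : (Fin n → Fin 2) → ℂ) : (outer v).IsHermitian := by
  ext a b
  simp [outer, conjTranspose_apply, vecMulVec_apply, mul_comm]

lemma outer_conj {n : ℕ} (U : QMat n) (v : (Fin n → Fin 2) → ℂ) :
    U * outer v * Uᴴ = outer (U *ᵥ v) := by
  ext a b
  simp only [outer, mul_apply, vecMulVec_apply, conjTranspose_apply, mulVec, dotProduct,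
    Pi.star_apply, star_sum, star_mul', star_star]
  rw [Finset.sum_mul_sum, Finset.sum_comm]
  refine Finset.sum_congr rfl fun j _ => ?_
  rw [Finset.sum_mul]
  refine Finset.sum_congr rfl fun k _ => ?_
  ring

lemma vecMulVec_mul_vecMulVec {n : ℕ} (v w v' w' : (Fin n → Fin 2) → ℂ) :
    Matrix.vecMulVec v w * Matrix.vecMulVec v' w' = (w ⬝ᵥ v') • Matrix.vecMulVec v w' := by
  ext a b
  simp only [mul_apply, vecMulVec_apply, Matrix.smul_apply, dotProduct, smul_eq_mul, Finset.sum_mul]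
  refine Finset.sum_congr rfl fun k _ => ?_
  ring

lemma outer_mul_outer {n : ℕ} (v w : (Fin n → Fin 2) → ℂ) :
    outer v * outer w = (star v ⬝ᵥ w) • Matrix.vecMulVec v (star w) :=
  vecMulVec_mul_vecMulVec _ _ _ _

lemma vecMulVec_mulVec' {n : ℕ} (v w x : (Fin n → Fin 2) → ℂ) :
    Matrix.vecMulVec v w *ᵥ x = (w ⬝ᵥ x) • v := by
  funext a
  simp only [mulVec, dotProduct, vecMulVec_apply, Pi.smul_apply, smul_eq_mul, Finset.sum_mul]
  refine Finset.sum_congr rfl fun k _ => ?_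
  ring

end OuterAlgebra

section DotProducts

lemma hGG : star vGHZ0 ⬝ᵥ vGHZ0 = 1 := by
  simp only [dotProduct, Pi.star_apply]
  rw [sum_pi3]
  simp (config := { decide := true }) [vGHZ0, Fin.sum_univ_two, RCLike.star_def, map_inv₀,
    Complex.conj_ofReal, csq]
  norm_num [csq]

lemma hGT : star vGHZ0 ⬝ᵥ vTar = 0 := by
  simp only [dotProduct, Pi.star_apply]
  rw [sum_pi3]
  simp (config := { decide := true }) [vGHZ0, vTar, Fin.sum_univ_two]

lemma hTT : star vTar ⬝ᵥ vTar = 1 := by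
  simp only [dotProduct, Pi.star_apply]
  rw [sum_pi3]
  simp (config := { decide := true }) [vTar, Fin.sum_univ_two, Complex.conj_ofReal]
  norm_num [csq]

lemma hTG : star vTar ⬝ᵥ vGHZ0 = 0 := by
  simp only [dotProduct, Pi.star_apply]
  rw [sum_pi3]
  simp (config := { decide := true }) [vGHZ0, vTar, Fin.sum_univ_two]

noncomputable def dvec : B3 → ℂ := fun u => v000 u - vGHZ0 u

lemma hdd : star dvec ⬝ᵥ dvec = ((2 - Real.sqrt 2 : ℝ) : ℂ) := by
  simp only [dotProduct, Pi.star_apply]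
  rw [sum_pi3]
  simp (config := { decide := true }) [dvec, v000, vGHZ0, Fin.sum_univ_two, Complex.conj_ofReal,
    map_sub]
  have h2 : ((Real.sqrt 2 : ℝ) : ℂ) * ((Real.sqrt 2:ℝ) : ℂ) = 2 := by
    norm_cast
    exact_mod_cast Real.mul_self_sqrt (by norm_num)
  have hs : ((Real.sqrt 2:ℝ) : ℂ) ≠ 0 := by
    simp only [ne_eq, Complex.ofReal_eq_zero]
    positivity
  field_simp
  ring_nf
  have hsq : ((Real.sqrt 2:ℝ) : ℂ)^2 = 2 := by rw [sq, h2]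
  have hcb : ((Real.sqrt 2:ℝ) : ℂ)^3 = 2 * ((Real.sqrt 2:ℝ) : ℂ) := by
    rw [pow_succ, hsq]
  rw [hsq, hcb]
  ring

lemma hdT : star dvec ⬝ᵥ vTar = 0 := by
  simp only [dotProduct, Pi.star_apply]
  rw [sum_pi3]
  simp (config := { decide := true }) [dvec, v000, vGHZ0, vTar, Fin.sum_univ_two]

lemma hd0 : star dvec ⬝ᵥ v000 = ((1 - (Real.sqrt 2)⁻¹ : ℝ) : ℂ) := by
  simp only [dotProduct, Pi.star_apply]
  rw [sum_pi3]
  simp (config := { decide := true }) [dvec, v000, vGHZ0, Fin.sum_univ_two, Complex.conj_ofReal,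
    map_sub]

end DotProducts

section Householder

noncomputable def kR : ℝ := 2 - Real.sqrt 2

lemma sqrt2_lt : Real.sqrt 2 < 2 := by
  nlinarith [Real.sq_sqrt (show (0:ℝ) ≤ 2 by norm_num), Real.sqrt_nonneg 2]

lemma kR_pos : 0 < kR := by simp [kR, sqrt2_lt]

lemma kR_ne : (kR : ℂ) ≠ 0 := by
  simp only [ne_eq, Complex.ofReal_eq_zero]
  exact ne_of_gt kR_pos

noncomputable def RH : QMat 3 := 1 - (((2 / kR : ℝ)) : ℂ) • Matrix.vecMulVec dvec (star dvec)

lemma RH_herm : RHᴴ = RH := by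
  unfold RH
  rw [conjTranspose_sub, conjTranspose_smul, conjTranspose_one]
  congr 1
  · exact congrArg₂ _ (Complex.conj_ofReal _) (by
      ext a b
      simp [conjTranspose_apply, vecMulVec_apply, mul_comm])

lemma RH_mul_RH : RH * RH = 1 := by
  unfold RH
  set s : ℂ := ((2 / kR : ℝ) : ℂ) with hs
  set M := Matrix.vecMulVec dvec (star dvec) with hM
  have hMM : M * M = ((2 - Real.sqrt 2 : ℝ) : ℂ) • M := by
    rw [hM, vecMulVec_mul_vecMulVec, hdd]
  rw [sub_mul, mul_sub, mul_sub, one_mul, mul_one, Matrix.smul_mul, Matrix.mul_smul,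
    Matrix.mul_smul, hMM]
  rw [smul_smul, smul_smul, one_mul]
  have hsc : s * s * ((2 - Real.sqrt 2 : ℝ) : ℂ) = s + s := by
    have h1 : ((2 - Real.sqrt 2 : ℝ) : ℂ) = (kR : ℂ) := by norm_cast
    rw [hs, h1]
    push_cast
    rw [div_mul_div_comm]
    field_simp [kR_ne]
    ring
  rw [hsc, add_smul]
  abel

lemma RH_unitary : RH ∈ Matrix.unitaryGroup (Fin 3 → Fin 2) ℂ := by
  rw [Matrix.mem_unitaryGroup_iff, Matrix.star_eq_conjTranspose, RH_herm]
  exact RH_mul_RH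

lemma RH_v000 : RH *ᵥ v000 = vGHZ0 := by
  unfold RH
  rw [Matrix.sub_mulVec, Matrix.one_mulVec, Matrix.smul_mulVec, vecMulVec_mulVec', hd0]
  funext u
  have hcoef : ((2 / kR : ℝ) : ℂ) * ((1 - (Real.sqrt 2)⁻¹ : ℝ) : ℂ) = 1 := by
    have h2 : Real.sqrt 2 * Real.sqrt 2 = 2 := Real.mul_self_sqrt (by norm_num)
    have hne : Real.sqrt 2 ≠ 0 := by positivity
    have hne2 : (2 - Real.sqrt 2) ≠ 0 := by nlinarith
    have : (2 / kR : ℝ) * ((1 - (Real.sqrt 2)⁻¹ : ℝ)) = 1 := by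
      rw [kR]
      field_simp
      nlinarith [h2]
    norm_cast
  simp only [Pi.sub_apply, Pi.smul_apply, smul_smul, hcoef, one_smul, smul_eq_mul, one_mul]
  show v000 u - dvec u = vGHZ0 u
  simp [dvec]

lemma RH_vTar : RH *ᵥ vTar = vTar := by
  unfold RH
  rw [Matrix.sub_mulVec, Matrix.one_mulVec, Matrix.smul_mulVec, vecMulVec_mulVec', hdT]
  simp

end Householder

section Spectral

lemma traceNorm_nonneg {n : ℕ} (X : QMat n) : 0 ≤ traceNorm X := by
  unfold traceNorm
  split
  · exact Finset.sum_nonneg fun i _ => abs_nonneg _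
  · exact le_refl _

lemma star_mul_self_V {n : ℕ} {X : QMat n} (hX : X.IsHermitian) :
    star (hX.eigenvectorUnitary : QMat n) * (hX.eigenvectorUnitary : QMat n) = 1 :=
  Unitary.coe_star_mul_self hX.eigenvectorUnitary

lemma diag_bound {n : ℕ} {X : QMat n} (hX : X.IsHermitian) (w : (Fin n → Fin 2) → ℂ)
    (c : ℝ) (hw : ∀ u, ‖w u‖ ≤ c) :
    ‖∑ u, w u * X u u‖ ≤ c * traceNorm X := by
  classical
  set V : QMat n := (hX.eigenvectorUnitary : QMat n) with hV
  set l := hX.eigenvalues with hl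
  have hentry : ∀ u, X u u = ∑ i, (l i : ℂ) * (V u i * star (V u i)) := by
    intro u
    conv_lhs => rw [hX.spectral_theorem, Unitary.conjStarAlgAut_apply]
    rw [Matrix.mul_apply]
    refine Finset.sum_congr rfl fun i _ => ?_
    rw [Matrix.mul_diagonal, Matrix.star_apply]
    simp only [Function.comp_apply, RCLike.ofReal_alg, Complex.real_smul, mul_one]
    ring
  have hcol : ∀ i, ∑ u, Complex.normSq (V u i) = 1 := by
    intro i
    have h1 : (star V * V) i i = (1 : QMat n) i i := by rw [star_mul_self_V hX]
    rw [Matrix.mul_apply, Matrix.one_apply_eq] at h1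
    have : ∑ u, (Complex.normSq (V u i) : ℂ) = 1 := by
      rw [← h1]
      refine Finset.sum_congr rfl fun u _ => ?_
      rw [Matrix.star_apply, Complex.star_def, ← Complex.normSq_eq_conj_mul_self]
    exact_mod_cast this
  have hswap : ∑ u, w u * X u u = ∑ i, (l i : ℂ) * ∑ u, w u * (V u i * star (V u i)) := by
    simp only [hentry, Finset.mul_sum]
    rw [Finset.sum_comm]
    refine Finset.sum_congr rfl fun i _ => ?_
    refine Finset.sum_congr rfl fun u _ => ?_
    ring
  have hc : 0 ≤ c := le_trans (norm_nonneg _) (hw fun _ => 0)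
  have hSi : ∀ i, ‖∑ u, w u * (V u i * star (V u i))‖ ≤ c := by
    intro i
    calc ‖∑ u, w u * (V u i * star (V u i))‖
        ≤ ∑ u, ‖w u * (V u i * star (V u i))‖ := norm_sum_le _ _
      _ = ∑ u, ‖w u‖ * Complex.normSq (V u i) := by
          refine Finset.sum_congr rfl fun u _ => ?_
          rw [norm_mul]
          congr 1
          rw [RCLike.star_def, Complex.mul_conj, Complex.norm_real, Real.norm_eq_abs,
            abs_of_nonneg (Complex.normSq_nonneg _)]
      _ ≤ ∑ u, c * Complex.normSq (V u i) := by
          refine Finset.sum_le_sum fun u _ => ?_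
          exact mul_le_mul_of_nonneg_right (hw u) (Complex.normSq_nonneg _)
      _ = c := by rw [← Finset.mul_sum, hcol i, mul_one]
  rw [hswap]
  calc ‖∑ i, (l i:ℂ) * ∑ u, w u * (V u i * star (V u i))‖
      ≤ ∑ i, ‖(l i:ℂ) * ∑ u, w u * (V u i * star (V u i))‖ := norm_sum_le _ _
    _ ≤ ∑ i, |l i| * c := by
        refine Finset.sum_le_sum fun i _ => ?_
        rw [norm_mul, Complex.norm_real, Real.norm_eq_abs]
        exact mul_le_mul_of_nonneg_left (hSi i) (abs_nonneg _)
    _ = c * traceNorm X := by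
        rw [traceNorm, dif_pos hX, ← Finset.sum_mul, mul_comm]

lemma eigenvalues_cube {n : ℕ} {X : QMat n} (hX : X.IsHermitian) (h3 : X * X * X = X)
    (i : Fin n → Fin 2) :
    |hX.eigenvalues i| = hX.eigenvalues i ^ 2 := by
  classical
  set V : QMat n := (hX.eigenvectorUnitary : QMat n) with hV
  set l := hX.eigenvalues with hl
  set Dg : QMat n := Matrix.diagonal (RCLike.ofReal ∘ l) with hD
  have hdiag : star V * X * V = Dg := by
    have h := hX.conjStarAlgAut_star_eigenvectorUnitary
    simp only [Unitary.conjStarAlgAut_apply, Unitary.coe_star, star_star] at h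
    exact h
  have hVV : V * star V = 1 := Unitary.coe_mul_star_self hX.eigenvectorUnitary
  have hD3 : Dg * Dg * Dg = Dg := by
    rw [← hdiag]
    calc star V * X * V * (star V * X * V) * (star V * X * V)
        = star V * (X * (V * star V) * X * (V * star V) * X) * V := by
          simp only [Matrix.mul_assoc]
      _ = star V * (X * X * X) * V := by rw [hVV]; simp only [Matrix.mul_one, Matrix.mul_assoc]
      _ = star V * X * V := by rw [h3, Matrix.mul_assoc]
  have e1 : Dg = Matrix.diagonal fun j => (l j : ℂ) := by
    rw [hD]; rfl
  rw [e1, Matrix.diagonal_mul_diagonal, Matrix.diagonal_mul_diagonal] at hD3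
  have hentry : ((l i : ℂ)) * ((l i : ℂ)) * ((l i : ℂ)) = (l i : ℂ) := by
    have := congrFun (congrFun hD3 i) i
    simpa [Matrix.diagonal_apply_eq] using this
  have hreal : l i * l i * l i = l i := by exact_mod_cast hentry
  have hcases : l i = 0 ∨ l i = 1 ∨ l i = -1 := by
    have hfac : l i * ((l i - 1) * (l i + 1)) = 0 := by ring_nf; linarith [hreal]
    rcases mul_eq_zero.mp hfac with h | h
    · exact Or.inl h
    · rcases mul_eq_zero.mp h with h | h
      · exact Or.inr (Or.inl (by linarith))
      · exact Or.inr (Or.inr (by linarith))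
  rcases hcases with h | h | h <;> rw [h] <;> norm_num

lemma traceNorm_eq_of_cube {n : ℕ} {X : QMat n} (hX : X.IsHermitian) (h3 : X * X * X = X) :
    traceNorm X = (Matrix.trace (X * X)).re := by
  classical
  have htr : Matrix.trace (X * X) = ∑ i, ((hX.eigenvalues i : ℂ))^2 := by
    set V : QMat n := (hX.eigenvectorUnitary : QMat n) with hV
    have hVV : V * star V = 1 := Unitary.coe_mul_star_self hX.eigenvectorUnitary
    have hsV : star V * V = 1 := Unitary.coe_star_mul_self hX.eigenvectorUnitary
    have hXd : X = V * Matrix.diagonal (RCLike.ofReal ∘ hX.eigenvalues) * star V :=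
      by have h := hX.spectral_theorem; simp only [Unitary.conjStarAlgAut_apply, Unitary.coe_star] at h; exact h
    set Dg : QMat n := Matrix.diagonal (RCLike.ofReal ∘ hX.eigenvalues) with hD
    have hXX : X * X = V * (Dg * Dg) * star V := by
      conv_lhs => rw [hXd]
      calc V * Dg * star V * (V * Dg * star V)
          = V * Dg * (star V * V) * Dg * star V := by simp only [Matrix.mul_assoc]
        _ = V * (Dg * Dg) * star V := by rw [hsV]; simp only [Matrix.mul_one, Matrix.mul_assoc]
    rw [hXX, Matrix.trace_mul_cycle, ← Matrix.mul_assoc, hsV, Matrix.one_mul]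
    rw [hD, Matrix.diagonal_mul_diagonal, Matrix.trace_diagonal]
    refine Finset.sum_congr rfl fun i _ => ?_
    simp [Function.comp, RCLike.ofReal_alg, Complex.real_smul, sq]
  rw [htr]
  rw [traceNorm, dif_pos hX]
  have : (∑ i, ((hX.eigenvalues i : ℂ))^2) = ((∑ i, (hX.eigenvalues i)^2 : ℝ) : ℂ) := by
    push_cast; ring
  rw [this, Complex.ofReal_re]
  refine Finset.sum_congr rfl fun i _ => ?_
  rw [eigenvalues_cube hX h3 i]

lemma traceNorm_zero {n : ℕ} : traceNorm (0 : QMat n) = 0 := by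
  rw [traceNorm_eq_of_cube (Matrix.isHermitian_zero) (by simp)]
  simp

end Spectral

section PartA

/-- The difference `ρ₁ - τ`. -/
noncomputable def X1 : QMat 3 := outer vGHZ0 - outer vTar

lemma X1_herm : X1.IsHermitian :=
  (outer_isHermitian vGHZ0).sub (outer_isHermitian vTar)

lemma X1_sq : X1 * X1 = outer vGHZ0 + outer vTar := by
  unfold X1
  rw [sub_mul, mul_sub, mul_sub, outer_mul_outer, outer_mul_outer, outer_mul_outer,
    outer_mul_outer, hGG, hGT, hTG, hTT, one_smul, one_smul, zero_smul, zero_smul]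
  show (outer vGHZ0 - 0) - (0 - outer vTar) = outer vGHZ0 + outer vTar
  abel

lemma X1_cube : X1 * X1 * X1 = X1 := by
  rw [X1_sq]
  unfold X1
  rw [add_mul, mul_sub, mul_sub, outer_mul_outer, outer_mul_outer, outer_mul_outer,
    outer_mul_outer, hGG, hGT, hTG, hTT, one_smul, one_smul, zero_smul, zero_smul]
  show (outer vGHZ0 - 0) + (0 - outer vTar) = outer vGHZ0 - outer vTar
  abel

lemma trace_outer (v : B3 → ℂ) : Matrix.trace (outer v) = star v ⬝ᵥ v := by
  rw [Matrix.trace, dotProduct]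
  refine Finset.sum_congr rfl fun u _ => ?_
  rw [Matrix.diag_apply, outer_apply, Pi.star_apply]
  ring

lemma tnX1 : traceNorm X1 = 2 := by
  rw [traceNorm_eq_of_cube X1_herm X1_cube, X1_sq, Matrix.trace_add, trace_outer, trace_outer,
    hGG, hTT]
  norm_num

lemma ptrace2_X1 : ptraceZero 2 X1 := by
  intro a b
  rw [vec3_expand a, vec3_expand b]
  rw [Fin.sum_univ_two]
  simp only [update_vec3_2, X1]
  generalize a 0 = a0; generalize a 1 = a1
  generalize b 0 = b0; generalize b 1 = b1
  fin_cases a0 <;> fin_cases a1 <;> fin_cases b0 <;> fin_cases b1 <;>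
    simp (config := { decide := true }) [outer, vecMulVec_apply, vGHZ0, vTar,
      Complex.conj_ofReal, RCLike.star_def, map_inv₀]

lemma ptraceZero_zero (i : Fin 3) : ptraceZero i (0 : QMat 3) := by
  intro a b
  simp

end PartA

section PartB

noncomputable def Xb1 : QMat 3 := Matrix.of fun u u' =>
  if u = u' ∧ u 2 = 0 then (if u 1 = 0 then (1/4 : ℂ) else -(1/4)) else 0
noncomputable def Xb2 : QMat 3 := Matrix.of fun u u' =>
  if u = u' then (if u 2 = 0 then (1/4 : ℂ) else -(1/4)) else 0
noncomputable def Xb0 : QMat 3 := (outer v000 - outer vTar) - Xb1 - Xb2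

lemma Xb1_herm : Xb1.IsHermitian := by
  ext a b
  by_cases h : a = b
  · subst h; simp [Xb1, conjTranspose_apply]
    split_ifs <;> simp [map_ofNat]
  · simp [Xb1, conjTranspose_apply, h, Ne.symm h]

lemma Xb2_herm : Xb2.IsHermitian := by
  ext a b
  by_cases h : a = b
  · subst h; simp [Xb2, conjTranspose_apply]
    split_ifs <;> simp [map_ofNat]
  · simp [Xb2, conjTranspose_apply, h, Ne.symm h]

lemma Xb0_herm : Xb0.IsHermitian :=
  (((outer_isHermitian v000).sub (outer_isHermitian vTar)).sub Xb1_herm).sub Xb2_herm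

lemma ptrace2_Xb2 : ptraceZero 2 Xb2 := by
  intro a b
  rw [vec3_expand a, vec3_expand b, Fin.sum_univ_two]
  simp only [update_vec3_2]
  generalize a 0 = a0; generalize a 1 = a1
  generalize b 0 = b0; generalize b 1 = b1
  fin_cases a0 <;> fin_cases a1 <;> fin_cases b0 <;> fin_cases b1 <;>
    simp (config := { decide := true }) [Xb2]

lemma ptrace1_Xb1 : ptraceZero 1 Xb1 := by
  intro a b
  rw [vec3_expand a, vec3_expand b, Fin.sum_univ_two]
  simp only [update_vec3_1]
  generalize a 0 = a0; generalize a 2 = a2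
  generalize b 0 = b0; generalize b 2 = b2
  fin_cases a0 <;> fin_cases a2 <;> fin_cases b0 <;> fin_cases b2 <;>
    simp (config := { decide := true }) [Xb1]

lemma ptrace0_Xb0 : ptraceZero 0 Xb0 := by
  intro a b
  rw [vec3_expand a, vec3_expand b, Fin.sum_univ_two]
  simp only [update_vec3_0, Xb0]
  generalize a 1 = a1; generalize a 2 = a2
  generalize b 1 = b1; generalize b 2 = b2
  fin_cases a1 <;> fin_cases a2 <;> fin_cases b1 <;> fin_cases b2 <;>
    simp (config := { decide := true }) [Xb1, Xb2, outer, vecMulVec_apply, v000, vTar,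
      Complex.conj_ofReal, RCLike.star_def, map_inv₀] <;>
    norm_num [csq]

end PartB

section Witnesses

noncomputable def w2 : B3 → ℂ := fun u => if u 2 = 0 then 1 else -1

noncomputable def ham : B3 → ℂ := fun u => ((u 0 : ℕ) : ℂ) + ((u 1 : ℕ) : ℂ) + ((u 2 : ℕ) : ℂ)

lemma hdiag_a : ∑ u, w2 u * ((outer vGHZ0 - outer vTar) u u) = 2 := by
  rw [sum_pi3]
  simp (config := { decide := true }) [w2, outer, vecMulVec_apply, vGHZ0, vTar, Matrix.sub_apply,
    Fin.sum_univ_two, Complex.conj_ofReal, RCLike.star_def, map_inv₀]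
  norm_num [csq]

lemma hdiag_b : ∑ u, ham u * ((outer v000 - outer vTar) u u) = -2 := by
  rw [sum_pi3]
  simp (config := { decide := true }) [ham, outer, vecMulVec_apply, v000, vTar, Matrix.sub_apply,
    Fin.sum_univ_two, Complex.conj_ofReal, RCLike.star_def, map_inv₀]
  norm_num [csq]

def flip3 (i : Fin 3) (u : B3) : B3 := Function.update u i (1 - u i)

lemma flip3_ne (i : Fin 3) (u : B3) : flip3 i u ≠ u := by
  intro h
  have := congrFun h i
  rw [flip3, Function.update_self] at this
  revert this
  have : ∀ x : Fin 2, 1 - x ≠ x := by decide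
  exact this (u i)

lemma flip3_flip3 (i : Fin 3) (u : B3) : flip3 i (flip3 i u) = u := by
  rw [flip3, flip3, Function.update_idem, Function.update_self]
  have : ∀ x : Fin 2, 1 - (1 - x) = x := by decide
  rw [this (u i), Function.update_eq_self]

lemma sum_diag_zero {X : QMat 3} (i : Fin 3) (hX : ptraceZero i X) (w : B3 → ℂ)
    (hw : ∀ u v, w (Function.update u i v) = w u) :
    ∑ u, w u * X u u = 0 := by
  refine Finset.sum_ninvolution (flip3 i) ?_ (fun u _ => flip3_ne i u)
    (fun u => Finset.mem_univ _) (flip3_flip3 i)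
  intro u
  have key := hX u u
  rw [Fin.sum_univ_two] at key
  have hwu : w (flip3 i u) = w u := hw u _
  rcases (by decide : ∀ x : Fin 2, x = 0 ∨ x = 1) (u i) with h | h
  · have hu : Function.update u i 0 = u := by rw [← h]; exact Function.update_eq_self i u
    have hf : flip3 i u = Function.update u i 1 := by
      rw [flip3, h, show (1 - 0 : Fin 2) = 1 from rfl]
    calc w u * X u u + w (flip3 i u) * X (flip3 i u) (flip3 i u)
        = w u * (X (Function.update u i 0) (Function.update u i 0)
            + X (Function.update u i 1) (Function.update u i 1)) := by
          rw [hf, hw u 1, hu]; ring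
      _ = 0 := by rw [key, mul_zero]
  · have hu : Function.update u i 1 = u := by rw [← h]; exact Function.update_eq_self i u
    have hf : flip3 i u = Function.update u i 0 := by
      rw [flip3, h, show (1 - 1 : Fin 2) = 0 from rfl]
    calc w u * X u u + w (flip3 i u) * X (flip3 i u) (flip3 i u)
        = w u * (X (Function.update u i 0) (Function.update u i 0)
            + X (Function.update u i 1) (Function.update u i 1)) := by
          rw [hf, hw u 0, hu]; ring
      _ = 0 := by rw [key, mul_zero]

lemma w2_indep (i : Fin 3) (hi : i ≠ 2) : ∀ u v, w2 (Function.update u i v) = w2 u := by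
  intro u v
  simp [w2, Function.update_of_ne (Ne.symm hi)]

lemma w2_abs : ∀ u, ‖w2 u‖ ≤ 1 := by
  intro u
  rw [w2]
  split_ifs <;> simp

noncomputable def gw (i : Fin 3) : B3 → ℂ := fun u => ((u i : ℕ) : ℂ) - 1/2

lemma ham_update (i : Fin 3) (u : B3) (v : Fin 2) :
    ham (Function.update u i v) = ham u - ((u i : ℕ) : ℂ) + ((v : ℕ) : ℂ) := by
  fin_cases i <;>
    simp (config := { decide := true }) [ham, Function.update_apply] <;> ring

lemma m_indep (i : Fin 3) : ∀ u v,
    (fun x => ham x - gw i x) (Function.update u i v) = (fun x => ham x - gw i x) u := by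
  intro u v
  simp only [gw, ham_update, Function.update_self]
  ring

lemma gw_abs (i : Fin 3) : ∀ u, ‖gw i u‖ ≤ 1/2 := by
  intro u
  rcases (by decide : ∀ x : Fin 2, x = 0 ∨ x = 1) (u i) with h | h <;>
    rw [gw] <;> rw [h] <;> norm_num

lemma ham_bound {Y : QMat 3} (i : Fin 3) (hherm : Y.IsHermitian) (hpt : ptraceZero i Y) :
    ‖∑ u, ham u * Y u u‖ ≤ (1/2) * traceNorm Y := by
  have h0 : ∑ u, (fun x => ham x - gw i x) u * Y u u = 0 :=
    sum_diag_zero i hpt _ (m_indep i)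
  have hrw : ∑ u, ham u * Y u u = ∑ u, gw i u * Y u u := by
    have hsub : ∑ u, (ham u - gw i u) * Y u u
        = ∑ u, ham u * Y u u - ∑ u, gw i u * Y u u := by
      rw [← Finset.sum_sub_distrib]
      refine Finset.sum_congr rfl fun u _ => ?_
      ring
    have := h0
    simp only at this
    rw [hsub] at this
    exact sub_eq_zero.mp this
  rw [hrw]
  exact diag_bound hherm (gw i) (1/2) (gw_abs i)

lemma decomp_diag_sum {X : QMat 3} (Xs : Fin 3 → QMat 3) (hsum : ∑ i, Xs i = X) (w : B3 → ℂ) :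
    ∑ u, w u * X u u = ∑ i, ∑ u, w u * (Xs i) u u := by
  rw [Finset.sum_comm]
  refine Finset.sum_congr rfl fun u _ => ?_
  rw [← hsum, Matrix.sum_apply, Finset.mul_sum]

end Witnesses

section Final

/-- The decomposition set appearing in `emNorm`. -/
def Sset (X : QMat 3) : Set ℝ := { r | ∃ Xs : Fin 3 → QMat 3,
    (∀ i, (Xs i).IsHermitian) ∧ (∀ i, ptraceZero i (Xs i)) ∧
    (∑ i, Xs i) = X ∧ r = ∑ i, traceNorm (Xs i) }

lemma emNorm_eq (X : QMat 3) : emNorm X = (1/2) * sInf (Sset X) := rfl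

lemma Sset_bddBelow (X : QMat 3) : BddBelow (Sset X) := by
  refine ⟨0, fun r hr => ?_⟩
  obtain ⟨Xs, _, _, _, hr⟩ := hr
  rw [hr]
  exact Finset.sum_nonneg fun i _ => traceNorm_nonneg _

lemma mem_a : (2:ℝ) ∈ Sset X1 := by
  refine ⟨![0, 0, X1], ?_, ?_, ?_, ?_⟩
  · intro i
    fin_cases i <;> simp [Matrix.isHermitian_zero, X1_herm]
  · intro i
    fin_cases i <;> simp [ptraceZero_zero, ptrace2_X1]
  · rw [Fin.sum_univ_three]
    simp
  · rw [Fin.sum_univ_three]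
    simp [traceNorm_zero, tnX1]

lemma lower_a : ∀ r ∈ Sset X1, 2 ≤ r := by
  rintro r ⟨Xs, hherm, hpt, hsum, rfl⟩
  have hA : (2:ℂ) = ∑ i, ∑ u, w2 u * Xs i u u := by
    rw [← decomp_diag_sum Xs hsum w2]
    rw [show (∑ u, w2 u * X1 u u) = 2 from hdiag_a]
  rw [Fin.sum_univ_three,
      sum_diag_zero 0 (hpt 0) w2 (w2_indep 0 (by decide)),
      sum_diag_zero 1 (hpt 1) w2 (w2_indep 1 (by decide)), zero_add, zero_add] at hA
  have hb := diag_bound (hherm 2) w2 1 w2_abs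
  rw [← hA] at hb
  rw [Complex.norm_two, one_mul] at hb
  rw [Fin.sum_univ_three]
  have h0 := traceNorm_nonneg (Xs 0)
  have h1 := traceNorm_nonneg (Xs 1)
  linarith

lemma emNorm_X1 : emNorm X1 = 1 := by
  rw [emNorm_eq]
  have : sInf (Sset X1) = 2 :=
    le_antisymm (csInf_le (Sset_bddBelow X1) mem_a) (le_csInf ⟨2, mem_a⟩ lower_a)
  rw [this]
  norm_num

lemma mem_b : (∑ i, traceNorm (![Xb0, Xb1, Xb2] i)) ∈ Sset (outer v000 - outer vTar) := by
  refine ⟨![Xb0, Xb1, Xb2], ?_, ?_, ?_, rfl⟩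
  · intro i
    fin_cases i <;> simp [Xb0_herm, Xb1_herm, Xb2_herm]
  · intro i
    fin_cases i <;> simp [ptrace0_Xb0, ptrace1_Xb1, ptrace2_Xb2]
  · rw [Fin.sum_univ_three]
    show Xb0 + Xb1 + Xb2 = outer v000 - outer vTar
    rw [Xb0]
    abel

lemma lower_b : ∀ r ∈ Sset (outer v000 - outer vTar), 4 ≤ r := by
  rintro r ⟨Xs, hherm, hpt, hsum, rfl⟩
  have hB : ∑ i, ∑ u, ham u * Xs i u u = -2 := by
    rw [← decomp_diag_sum Xs hsum ham]
    exact hdiag_b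
  have habs : (2:ℝ) = ‖∑ i, ∑ u, ham u * Xs i u u‖ := by
    rw [hB]
    simp
  have hle : (2:ℝ) ≤ ∑ i, (1/2) * traceNorm (Xs i) := by
    refine le_trans (le_of_eq habs) ?_
    calc ‖∑ i, ∑ u, ham u * Xs i u u‖
        ≤ ∑ i, ‖∑ u, ham u * Xs i u u‖ := norm_sum_le _ _
      _ ≤ ∑ i, (1/2) * traceNorm (Xs i) :=
          Finset.sum_le_sum fun i _ => ham_bound i (hherm i) (hpt i)
  rw [← Finset.mul_sum] at hle
  linarith

lemma emNorm_b : 2 ≤ emNorm (outer v000 - outer vTar) := by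
  rw [emNorm_eq]
  have : (4:ℝ) ≤ sInf (Sset (outer v000 - outer vTar)) :=
    le_csInf ⟨_, mem_b⟩ lower_b
  linarith

end Final

open Matrix in
/-- No unitarily invariant distance can register the local improvement from
`|000⟩` to `|GHZ₂⟩|0⟩` towards the target `|GHZ₂⟩|1⟩`: any distance `D` invariant
under joint unitary conjugation satisfies `D(ρ₀,τ) = D(ρ₁,τ)`, whereas the quantum
EM distance satisfies `D_EM(ρ₁,τ) = 1 < D_EM(ρ₀,τ)`. -/
theorem unitarily_invariant_vs_em (D : QMat 3 → QMat 3 → ℝ)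
    (hD : ∀ U : Matrix (Fin 3 → Fin 2) (Fin 3 → Fin 2) ℂ,
      U ∈ Matrix.unitaryGroup (Fin 3 → Fin 2) ℂ →
      ∀ ρ σ : QMat 3, D (U * ρ * Uᴴ) (U * σ * Uᴴ) = D ρ σ) :
    D (outer v000) (outer vTar) = D (outer vGHZ0) (outer vTar) ∧
    emDist (outer vGHZ0) (outer vTar) = 1 ∧
    emDist (outer vGHZ0) (outer vTar) < emDist (outer v000) (outer vTar) := by
  have h2 : emDist (outer vGHZ0) (outer vTar) = 1 := by
    rw [emDist]
    exact emNorm_X1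
  refine ⟨?_, h2, ?_⟩
  · have h := hD RH RH_unitary (outer v000) (outer vTar)
    rw [outer_conj, outer_conj, RH_v000, RH_vTar] at h
    exact h.symm
  · rw [h2, emDist]
    have := emNorm_b
    linarith
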